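/- Let H be a subset of the bounded right-uniformly continuous real-valued functions on a topological group G. Then H is UEB (norm-bounded and right-uniformly equicontinuous) if and only if H is norm-bounded and there exists a continuous right-invariant pseudo-metric d on G such that every f ∈ H is 1-Lipschitz with respect to d. -/

import Mathlib

open Filter Topology

/-- A norm-bounded family `H` of real functions on a topological group `G` is
right-uniformly equicontinuous iff there is a continuous right-invariant pseudo-metric
`d` on `G` such that every `f ∈ H` is `1`-Lipschitz with respect to `d`. -/
theorem stmt13 {G : Type*} [Group G] [TopologicalSpace G] [IsTopologicalGroup G]
    (H : Set (G → ℝ)) :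
    ((∃ C : ℝ, ∀ f ∈ H, ∀ x, |f x| ≤ C) ∧
      (∀ ε > 0, ∃ U ∈ 𝓝 (1 : G), ∀ f ∈ H, ∀ x y : G, y * x⁻¹ ∈ U → |f x - f y| ≤ ε)) ↔
    ((∃ C : ℝ, ∀ f ∈ H, ∀ x, |f x| ≤ C) ∧
      ∃ d : G → G → ℝ,
        Continuous (fun p : G × G => d p.1 p.2) ∧
        (∀ x, d x x = 0) ∧ (∀ x y, 0 ≤ d x y) ∧ (∀ x y, d x y = d y x) ∧
        (∀ x y z, d x z ≤ d x y + d y z) ∧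
        (∀ x y g : G, d (x * g) (y * g) = d x y) ∧
        (∀ f ∈ H, ∀ x y, |f x - f y| ≤ d x y)) := by
  constructor
  · rintro ⟨⟨C, hC⟩, hequi⟩
    refine ⟨⟨C, hC⟩, ?_⟩
    set S : G → G → Set ℝ :=
      fun x y => insert 0 {v | ∃ f ∈ H, ∃ g : G, v = |f (x * g) - f (y * g)|} with hS
    set d : G → G → ℝ := fun x y => sSup (S x y) with hd
    have hBdd : ∀ x y, BddAbove (S x y) := by
      intro x y
      refine ⟨max 0 (C + C), ?_⟩
      rintro v (rfl | ⟨f, hf, g, rfl⟩)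
      · exact le_max_left _ _
      · refine le_trans ?_ (le_max_right _ _)
        calc |f (x * g) - f (y * g)| ≤ |f (x * g)| + |f (y * g)| := abs_sub _ _
          _ ≤ C + C := add_le_add (hC f hf _) (hC f hf _)
    have hne : ∀ x y, (S x y).Nonempty := fun x y => ⟨0, Set.mem_insert _ _⟩
    have hnonneg : ∀ x y, 0 ≤ d x y := fun x y => le_csSup (hBdd x y) (Set.mem_insert _ _)
    have hdom : ∀ f ∈ H, ∀ x y, |f x - f y| ≤ d x y := by
      intro f hf x y
      refine le_csSup (hBdd x y) ?_
      exact Set.mem_insert_of_mem _ ⟨f, hf, 1, by simp⟩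
    have hself : ∀ x, d x x = 0 := by
      intro x
      refine le_antisymm ?_ (hnonneg x x)
      refine csSup_le (hne x x) ?_
      rintro v (rfl | ⟨f, hf, g, rfl⟩) <;> simp
    have hsym : ∀ x y, d x y = d y x := by
      have key : ∀ x y : G, S x y = S y x := by
        intro x y
        ext v
        constructor <;> rintro (rfl | ⟨f, hf, g, rfl⟩)
        · exact Set.mem_insert _ _
        · exact Set.mem_insert_of_mem _ ⟨f, hf, g, (abs_sub_comm _ _)⟩
        · exact Set.mem_insert _ _
        · exact Set.mem_insert_of_mem _ ⟨f, hf, g, (abs_sub_comm _ _)⟩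
      intro x y; show sSup (S x y) = sSup (S y x); rw [key]
    have htri : ∀ x y z, d x z ≤ d x y + d y z := by
      intro x y z
      refine csSup_le (hne x z) ?_
      rintro v (rfl | ⟨f, hf, g, rfl⟩)
      · exact add_nonneg (hnonneg x y) (hnonneg y z)
      · calc |f (x * g) - f (z * g)|
            ≤ |f (x * g) - f (y * g)| + |f (y * g) - f (z * g)| := abs_sub_le _ _ _
          _ ≤ d x y + d y z := add_le_add
              (le_csSup (hBdd x y) (Set.mem_insert_of_mem _ ⟨f, hf, g, rfl⟩))
              (le_csSup (hBdd y z) (Set.mem_insert_of_mem _ ⟨f, hf, g, rfl⟩))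
    have hinv : ∀ x y g : G, d (x * g) (y * g) = d x y := by
      intro x y h
      have key : S (x * h) (y * h) = S x y := by
        ext v
        constructor <;> rintro (rfl | ⟨f, hf, g, rfl⟩)
        · exact Set.mem_insert _ _
        · exact Set.mem_insert_of_mem _ ⟨f, hf, h * g, by rw [mul_assoc, mul_assoc]⟩
        · exact Set.mem_insert _ _
        · exact Set.mem_insert_of_mem _ ⟨f, hf, h⁻¹ * g, by group⟩
      show sSup (S (x * h) (y * h)) = sSup (S x y); rw [key]
    have key : ∀ ε > 0, ∃ U ∈ 𝓝 (1 : G), ∀ x y : G, y * x⁻¹ ∈ U → d x y ≤ ε := by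
      intro ε hε
      obtain ⟨U, hU, hUP⟩ := hequi ε hε
      refine ⟨U, hU, fun x y hxy => ?_⟩
      refine csSup_le (hne x y) ?_
      rintro v (rfl | ⟨f, hf, g, rfl⟩)
      · exact hε.le
      · refine hUP f hf (x * g) (y * g) ?_
        have : y * g * (x * g)⁻¹ = y * x⁻¹ := by group
        rw [this]; exact hxy
    have hcont : Continuous (fun p : G × G => d p.1 p.2) := by
      rw [continuous_iff_continuousAt]
      rintro ⟨x₀, y₀⟩
      rw [ContinuousAt, Metric.tendsto_nhds]
      intro ε hε
      obtain ⟨U, hU, hUP⟩ := key (ε / 3) (by positivity)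
      have e1 : {x : G | x * x₀⁻¹ ∈ U} ∈ 𝓝 x₀ := by
        have ht : Tendsto (fun x : G => x * x₀⁻¹) (𝓝 x₀) (𝓝 1) := by
          have := (continuous_id.mul (continuous_const : Continuous fun _ : G => x₀⁻¹)).tendsto x₀
          simpa [Pi.mul_def] using this
        exact ht hU
      have e2 : {y : G | y * y₀⁻¹ ∈ U} ∈ 𝓝 y₀ := by
        have ht : Tendsto (fun y : G => y * y₀⁻¹) (𝓝 y₀) (𝓝 1) := by
          have := (continuous_id.mul (continuous_const : Continuous fun _ : G => y₀⁻¹)).tendsto y₀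
          simpa [Pi.mul_def] using this
        exact ht hU
      have h1 : ∀ᶠ p : G × G in 𝓝 (x₀, y₀), p.1 * x₀⁻¹ ∈ U ∧ p.2 * y₀⁻¹ ∈ U := by
        rw [nhds_prod_eq]
        exact Filter.prod_mem_prod e1 e2
      filter_upwards [h1] with p hp
      have hx : d x₀ p.1 ≤ ε / 3 := hUP x₀ p.1 hp.1
      have hy : d y₀ p.2 ≤ ε / 3 := hUP y₀ p.2 hp.2
      rw [Real.dist_eq, abs_sub_lt_iff]
      have t1 : d p.1 p.2 ≤ d p.1 x₀ + d x₀ y₀ + d y₀ p.2 :=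
        le_trans (htri p.1 x₀ p.2) (by linarith [htri x₀ y₀ p.2])
      have t2 : d x₀ y₀ ≤ d x₀ p.1 + d p.1 p.2 + d p.2 y₀ :=
        le_trans (htri x₀ p.1 y₀) (by linarith [htri p.1 p.2 y₀])
      have s1 : d p.1 x₀ = d x₀ p.1 := hsym _ _
      have s2 : d p.2 y₀ = d y₀ p.2 := hsym _ _
      constructor <;> linarith
    exact ⟨d, hcont, hself, hnonneg, hsym, htri, hinv, hdom⟩
  · rintro ⟨hb, d, hcont, hself, hnonneg, hsym, htri, hinv, hdom⟩
    refine ⟨hb, fun ε hε => ?_⟩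
    have hc1 : ContinuousAt (fun u : G => d 1 u) 1 := by
      have : Continuous (fun u : G => d 1 u) :=
        hcont.comp (Continuous.prodMk continuous_const continuous_id)
      exact this.continuousAt
    have h0 : d 1 1 = 0 := hself 1
    have hU : {u : G | d 1 u < ε} ∈ 𝓝 (1 : G) := by
      have := hc1 (Iio_mem_nhds (show d 1 1 < ε by rw [h0]; exact hε))
      exact this
    refine ⟨{u : G | d 1 u < ε}, hU, fun f hf x y hxy => ?_⟩
    have : d x y = d 1 (y * x⁻¹) := by
      have := hinv 1 (y * x⁻¹) x
      simpa [mul_assoc] using this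
    exact le_trans (hdom f hf x y) (by rw [this]; exact (hxy).le)
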